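/- Let r ∈ (0, b) satisfy the adjustment-coefficient equation c + δ/(a + r) = γ/(b − r), and define ψ(u) := (1 − r/b)·e^{−r·u} for u ∈ [0,∞). Then for every u ∈ [0,∞): c·ψ(u) = −δ·e^{au}·∫_u^∞ ψ(z)e^{−az} dz + γ·e^{−bu}·∫_0^u ψ(z)e^{bz} dz + (γ/b)·e^{−bu}. Moreover, if A ∈ ℝ is such that u ↦ A·e^{−r·u} satisfies the same equation for all u ∈ [0,∞), then A = 1 − r/b. -/

import Mathlib

open MeasureTheory Set Filter

lemma int_exp_Ioi' (k u : ℝ) (hk : 0 < k) :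
    ∫ z in Ioi u, Real.exp (-(k * z)) = Real.exp (-(k * u)) / k := by
  have hderiv : ∀ x ∈ Ici u, HasDerivAt (fun z => -Real.exp (-(k * z)) / k)
      (Real.exp (-(k * x))) x := by
    intro x hx
    have h1 : HasDerivAt (fun z : ℝ => -(k * z)) (-k) x := by
      simpa using (hasDerivAt_id x).const_mul (-k)
    have h2 := (Real.hasDerivAt_exp (-(k * x))).comp x h1
    have h3 := (h2.neg).div_const k
    refine h3.congr_deriv ?_
    field_simp
  have hint : IntegrableOn (fun z => Real.exp (-(k * z))) (Ioi u) := by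
    simpa [mul_comm] using exp_neg_integrableOn_Ioi u hk
  have htend : Tendsto (fun z => -Real.exp (-(k * z)) / k) atTop (nhds 0) := by
    have : Tendsto (fun z : ℝ => Real.exp (-(k * z))) atTop (nhds 0) := by
      simpa using (tendsto_id.const_mul_atTop hk : Tendsto (fun z : ℝ => k * z) atTop atTop)
    have := (this.neg).div_const k
    simpa using this
  have := MeasureTheory.integral_Ioi_of_hasDerivAt_of_tendsto' hderiv hint htend
  rw [this]
  ring

lemma int_exp_interval' (k u : ℝ) (hk : k ≠ 0) :
    ∫ z in (0:ℝ)..u, Real.exp (k * z) = (Real.exp (k * u) - 1) / k := by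
  have hderiv : ∀ x ∈ uIcc (0:ℝ) u, HasDerivAt (fun z => Real.exp (k * z) / k)
      (Real.exp (k * x)) x := by
    intro x _
    have h1 : HasDerivAt (fun z : ℝ => k * z) k x := by
      simpa using (hasDerivAt_id x).const_mul k
    have h2 := (Real.hasDerivAt_exp (k * x)).comp x h1
    have h3 := h2.div_const k
    refine h3.congr_deriv ?_
    field_simp
  have hcont : IntervalIntegrable (fun z => Real.exp (k * z)) volume 0 u :=
    (Real.continuous_exp.comp (continuous_const.mul continuous_id)).intervalIntegrable _ _
  rw [intervalIntegral.integral_eq_sub_of_hasDerivAt hderiv hcont]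
  field_simp
  simp

/-- If `r ∈ (0, b)` solves the adjustment-coefficient equation
`c + δ/(a + r) = γ/(b - r)` and `ψ(u) := (1 - r/b) e^{-ru}`, then `ψ` satisfies
`c ψ(u) = -δ e^{au} ∫_u^∞ ψ(z)e^{-az} dz + γ e^{-bu} ∫_0^u ψ(z)e^{bz} dz + (γ/b) e^{-bu}`
for all `u ≥ 0`; moreover `A = 1 - r/b` is the only constant for which
`u ↦ A e^{-ru}` satisfies this equation. -/
theorem exponential_solution_of_integral_equation
    (a b γ δ : ℝ) (ha : 0 < a) (hb : 0 < b) (hγ : 0 < γ) (hδ : 0 < δ)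
    (c : ℝ) (hc : 0 ≤ c)
    (r : ℝ) (hr_mem : r ∈ Ioo 0 b) (hr_eq : c + δ / (a + r) = γ / (b - r))
    (ψ : ℝ → ℝ) (hψ : ∀ u : ℝ, ψ u = (1 - r / b) * Real.exp (-r * u)) :
    (∀ u : ℝ, 0 ≤ u →
      c * ψ u = -δ * Real.exp (a * u) * (∫ z in Ioi u, ψ z * Real.exp (-(a * z)))
        + γ * Real.exp (-(b * u)) * (∫ z in (0:ℝ)..u, ψ z * Real.exp (b * z))
        + (γ / b) * Real.exp (-(b * u))) ∧
    (∀ A : ℝ,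
      (∀ u : ℝ, 0 ≤ u →
        c * (A * Real.exp (-r * u))
          = -δ * Real.exp (a * u)
              * (∫ z in Ioi u, A * Real.exp (-r * z) * Real.exp (-(a * z)))
            + γ * Real.exp (-(b * u))
              * (∫ z in (0:ℝ)..u, A * Real.exp (-r * z) * Real.exp (b * z))
            + (γ / b) * Real.exp (-(b * u))) →
      A = 1 - r / b) := by
  obtain ⟨hr0, hrb⟩ := hr_mem
  have har : (0:ℝ) < a + r := by linarith
  have hbr : (0:ℝ) < b - r := by linarith
  have har' : a + r ≠ 0 := ne_of_gt har
  have hbr' : b - r ≠ 0 := ne_of_gt hbr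
  have hb' : b ≠ 0 := ne_of_gt hb
  -- the two integral computations
  have I1 : ∀ A u : ℝ, (∫ z in Ioi u, A * Real.exp (-r * z) * Real.exp (-(a * z)))
      = A * (Real.exp (-((a + r) * u)) / (a + r)) := by
    intro A u
    have h : (∫ z in Ioi u, A * Real.exp (-r * z) * Real.exp (-(a * z)))
        = ∫ z in Ioi u, A * Real.exp (-((a + r) * z)) := by
      congr 1
      ext z
      rw [mul_assoc, ← Real.exp_add]
      congr 2
      ring
    rw [h, MeasureTheory.integral_const_mul, int_exp_Ioi' (a + r) u har]
  have I2 : ∀ A u : ℝ, (∫ z in (0:ℝ)..u, A * Real.exp (-r * z) * Real.exp (b * z))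
      = A * ((Real.exp ((b - r) * u) - 1) / (b - r)) := by
    intro A u
    have h : (∫ z in (0:ℝ)..u, A * Real.exp (-r * z) * Real.exp (b * z))
        = ∫ z in (0:ℝ)..u, A * Real.exp ((b - r) * z) := by
      apply intervalIntegral.integral_congr
      intro z _
      show A * Real.exp (-r * z) * Real.exp (b * z) = A * Real.exp ((b - r) * z)
      rw [mul_assoc, ← Real.exp_add]
      congr 2
      ring
    rw [h, intervalIntegral.integral_const_mul, int_exp_interval' (b - r) u hbr']
  -- the right-hand side in closed form
  have key : ∀ A u : ℝ,
      -δ * Real.exp (a * u) * (∫ z in Ioi u, A * Real.exp (-r * z) * Real.exp (-(a * z)))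
        + γ * Real.exp (-(b * u)) * (∫ z in (0:ℝ)..u, A * Real.exp (-r * z) * Real.exp (b * z))
        + (γ / b) * Real.exp (-(b * u))
      = (-δ * A / (a + r) + γ * A / (b - r)) * Real.exp (-r * u)
        + (γ / b - γ * A / (b - r)) * Real.exp (-(b * u)) := by
    intro A u
    rw [I1, I2]
    have e1 : Real.exp (a * u) * Real.exp (-((a + r) * u)) = Real.exp (-r * u) := by
      rw [← Real.exp_add]; congr 1; ring
    have e2 : Real.exp (-(b * u)) * Real.exp ((b - r) * u) = Real.exp (-r * u) := by
      rw [← Real.exp_add]; congr 1; ring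
    linear_combination (-δ * A / (a + r)) * e1 + (γ * A / (b - r)) * e2
  have hc' : c = γ / (b - r) - δ / (a + r) := by linarith
  constructor
  · intro u hu
    have h1 : ∀ z : ℝ, ψ z * Real.exp (-(a * z))
        = (1 - r / b) * Real.exp (-r * z) * Real.exp (-(a * z)) := by
      intro z; rw [hψ]
    have h2 : ∀ z : ℝ, ψ z * Real.exp (b * z)
        = (1 - r / b) * Real.exp (-r * z) * Real.exp (b * z) := by
      intro z; rw [hψ]
    simp only [h1, h2, hψ u]
    rw [key (1 - r / b) u]
    rw [hc']
    have hA : (1 - r / b) = (b - r) / b := by field_simp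
    rw [hA]
    field_simp
    ring
  · intro A hA
    have h0 := hA 0 le_rfl
    rw [key A 0] at h0
    simp only [mul_zero, neg_zero, Real.exp_zero, mul_one] at h0
    -- h0 : c * A = (-δ*A/(a+r) + γ*A/(b-r)) + (γ/b - γ*A/(b-r))
    rw [hc'] at h0
    have hγ' : γ ≠ 0 := ne_of_gt hγ
    have h1 : γ * A / (b - r) = γ / b := by linear_combination h0
    have h2 : γ * A * b = γ * (b - r) := (div_eq_div_iff hbr' hb').mp h1
    have h3 : A * b = b - r := mul_left_cancel₀ hγ' (by linarith : γ * (A * b) = γ * (b - r))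
    field_simp
    linarith
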